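/- If ⟨·,·⟩ is an ad-invariant nondegenerate symmetric bilinear form on a finite-dimensional Lie algebra g, then for every r ≥ 0 the orthogonal complement of the r-th term C^r(g) of the lower central series equals the r-th term C_r(g) of the upper central series. -/
import Mathlib


/-- With respect to an ad-invariant nondegenerate symmetric bilinear form, the orthogonal
complement of the r-th term of the lower central series equals the r-th term of the
upper central series. -/
theorem orthogonal_lcs_eq_ucs
    {K L : Type*} [Field K] [CharZero K] [LieRing L] [LieAlgebra K L]
    [FiniteDimensional K L]
    (B : L →ₗ[K] L →ₗ[K] K)
    (hsymm : ∀ x y : L, B x y = B y x)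
    (hnd : ∀ x : L, (∀ y : L, B x y = 0) → x = 0)
    (hinv : ∀ x y z : L, B ⁅x, y⁆ z + B y ⁅x, z⁆ = 0) :
    ∀ r : ℕ, ∀ x : L,
      (∀ v ∈ LieModule.lowerCentralSeries K L L r, B x v = 0) ↔
        x ∈ (⊥ : LieSubmodule K L L).ucs r := by
  intro r
  induction r with
  | zero =>
    intro x
    simp only [LieModule.lowerCentralSeries_zero, LieSubmodule.ucs_zero,
      LieSubmodule.mem_bot]
    constructor
    · intro h
      exact hnd x fun y => h y (LieSubmodule.mem_top y)
    · rintro rfl v _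
      simp
  | succ r ih =>
    intro x
    rw [LieSubmodule.ucs_succ, LieSubmodule.mem_normalizer]
    constructor
    · intro h y
      rw [← ih]
      intro v hv
      have hmem : ⁅y, v⁆ ∈ LieModule.lowerCentralSeries K L L (r + 1) := by
        rw [LieModule.lowerCentralSeries_succ]
        exact LieSubmodule.lie_mem_lie (LieSubmodule.mem_top y) hv
      have h1 := h _ hmem
      have h2 := hinv y x v
      linear_combination h2 - h1
    · intro h v hv
      rw [LieModule.lowerCentralSeries_succ, ← LieSubmodule.mem_toSubmodule,
        LieSubmodule.lieIdeal_oper_eq_linear_span'] at hv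
      induction hv using Submodule.span_induction with
      | mem w hw =>
        obtain ⟨y, -, w, hw, rfl⟩ := hw
        have h1 : B ⁅y, x⁆ w = 0 := (ih ⁅y, x⁆).mpr (h y) w hw
        have h2 := hinv y x w
        linear_combination h2 - h1
      | zero => simp
      | add a b _ _ ha hb => rw [map_add, ha, hb, add_zero]
      | smul c a _ ha => rw [map_smul, ha, smul_zero]
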